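/- Sharpened Carathéodory: Let R ⊆ ℝ^d and y ∈ relint(conv R). Then for any x ∈ R there exists an affinely independent subset S ⊆ R with at most d+1 points such that x ∈ S and y ∈ relint(conv S). -/

import Mathlib

open Set Finset

attribute [local instance] AffineSubspace.toNormedAddTorsor

/-- From a point of the intrinsic interior, one can move past it away from any point of the
set: `y` lies strictly between `x` and some `z ∈ C`. -/
lemma exists_beyond {E : Type*} [NormedAddCommGroup E] [NormedSpace ℝ E] {C : Set E} {x y : E}
    (hx : x ∈ C) (hy : y ∈ intrinsicInterior ℝ C) :
    ∃ z ∈ C, ∃ a b : ℝ, 0 < a ∧ 0 < b ∧ a + b = 1 ∧ a • x + b • z = y := by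
  obtain ⟨y₀, hy₀, hyc⟩ := mem_intrinsicInterior.mp hy
  haveI : Nonempty (affineSpan ℝ C) := ⟨⟨x, subset_affineSpan ℝ C hx⟩⟩
  set x₀ : affineSpan ℝ C := ⟨x, subset_affineSpan ℝ C hx⟩ with hx₀
  set v : (affineSpan ℝ C).direction := y₀ -ᵥ x₀ with hv
  have hc : Continuous (fun t : ℝ => (t • v) +ᵥ y₀) := by fun_prop
  have h0 : (fun t : ℝ => (t • v) +ᵥ y₀) 0 ∈ interior (((↑) : _ → E) ⁻¹' C) := by
    simpa using hy₀
  have hev : ∀ᶠ t : ℝ in nhds 0, ((t • v) +ᵥ y₀) ∈ interior (((↑) : _ → E) ⁻¹' C) :=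
    (hc.tendsto 0).eventually (isOpen_interior.eventually_mem h0)
  obtain ⟨δ, hδpos, hδ⟩ := Metric.eventually_nhds_iff.mp hev
  set ε : ℝ := δ / 2 with hε
  have hεpos : 0 < ε := by positivity
  have hz₀ : ((ε • v) +ᵥ y₀) ∈ interior (((↑) : _ → E) ⁻¹' C) := by
    apply hδ
    rw [Real.dist_eq, sub_zero, abs_of_pos hεpos]
    linarith
  set z₀ := (ε • v) +ᵥ y₀ with hz₀def
  have hzC : (z₀ : E) ∈ C := interior_subset (s := (Subtype.val ⁻¹' C)) hz₀
  have hz : (z₀ : E) = ε • (y - x) + y := by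
    rw [hz₀def, hv]
    push_cast [AffineSubspace.coe_vadd]
    simp [vadd_eq_add, vsub_eq_sub, hyc]
    rfl
  have h1ε : (0:ℝ) < 1 + ε := by linarith
  refine ⟨z₀, hzC, ε / (1 + ε), 1 / (1 + ε), by positivity, by positivity, ?_, ?_⟩
  · field_simp
    ring
  · rw [hz]
    match_scalars <;> (field_simp; try ring)

/-- Anchored Carathéodory reduction: a point written as a positive convex combination of a
finite set containing `x` can be written as a positive convex combination of an affinely
independent subset still containing `x`. -/
lemma anchored_carath {E : Type*} [AddCommGroup E] [Module ℝ E] :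
    ∀ (n : ℕ) (T : Finset E) (x y : E) (w : E → ℝ), T.card ≤ n → x ∈ T →
      (∀ u ∈ T, 0 < w u) → (∑ u ∈ T, w u) = 1 → (∑ u ∈ T, w u • u) = y →
      ∃ (S : Finset E) (w' : E → ℝ), S ⊆ T ∧ x ∈ S ∧
        AffineIndependent ℝ (fun p : {z // z ∈ S} => (p : E)) ∧
        (∀ u ∈ S, 0 < w' u) ∧ (∑ u ∈ S, w' u) = 1 ∧ (∑ u ∈ S, w' u • u) = y := by
  intro n
  induction n with
  | zero =>
    intro T x y w hcard hx _ _ _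
    have := Finset.card_pos.mpr ⟨x, hx⟩
    omega
  | succ n ih =>
    intro T x y w hcard hx hpos hsum hcombo
    classical
    by_cases hai : AffineIndependent ℝ (fun p : {z // z ∈ T} => (p : E))
    · exact ⟨T, w, Finset.Subset.refl T, hx, hai, hpos, hsum, hcombo⟩
    · obtain ⟨g0, hg0combo, hg0sum, hg0ne⟩ :=
        exists_nontrivial_relation_sum_zero_of_not_affine_ind hai
      set g : E → ℝ := if g0 x ≤ 0 then g0 else -g0 with hg
      have hgcombo : ∑ e ∈ T, g e • e = 0 := by
        by_cases h : g0 x ≤ 0 <;>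
          simp [hg, h, neg_smul, Finset.sum_neg_distrib, hg0combo]
      have hgsum : ∑ e ∈ T, g e = 0 := by
        by_cases h : g0 x ≤ 0 <;> simp [hg, h, Finset.sum_neg_distrib, hg0sum]
      have hgx : g x ≤ 0 := by
        by_cases h : g0 x ≤ 0 <;> simp [hg, h]
        linarith [not_le.mp h]
      have hgne : ∃ u ∈ T, g u ≠ 0 := by
        obtain ⟨u, huT, hu⟩ := hg0ne
        refine ⟨u, huT, ?_⟩
        by_cases h : g0 x ≤ 0 <;> simp [hg, h, hu]
      obtain ⟨u₁, hu₁T, hu₁⟩ := exists_pos_of_sum_zero_of_exists_nonzero g hgsum hgne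
      set s := T.filter (fun z => 0 < g z) with hs
      obtain ⟨i₀, hi₀s, hmin⟩ := s.exists_min_image (fun z => w z / g z)
        ⟨u₁, Finset.mem_filter.mpr ⟨hu₁T, hu₁⟩⟩
      have hi₀T : i₀ ∈ T := (Finset.mem_filter.mp hi₀s).1
      have hgi₀ : 0 < g i₀ := (Finset.mem_filter.mp hi₀s).2
      have hi₀x : i₀ ≠ x := by
        rintro rfl
        linarith
      set c := w i₀ / g i₀ with hc
      have hcnn : 0 ≤ c := div_nonneg (hpos i₀ hi₀T).le hgi₀.le
      set k : E → ℝ := fun z => w z - c * g z with hk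
      have hki₀ : k i₀ = 0 := by
        simp only [hk, hc]
        field_simp
        ring
      have hknn : ∀ e ∈ T, 0 ≤ k e := by
        intro e heT
        by_cases hes : e ∈ s
        · have hge : 0 < g e := (Finset.mem_filter.mp hes).2
          have hm := hmin e hes
          simp only [hk]
          rw [sub_nonneg, ← le_div_iff₀ hge]
          exact hm
        · have hge : g e ≤ 0 := by
            by_contra h
            exact hes (Finset.mem_filter.mpr ⟨heT, not_le.mp h⟩)
          have := hpos e heT
          simp only [hk]
          nlinarith
      have hkx : 0 < k x := by
        have := hpos x hx
        simp only [hk]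
        nlinarith
      have hksum : ∑ e ∈ T, k e = 1 := by
        simp only [hk]
        rw [Finset.sum_sub_distrib, hsum, ← Finset.mul_sum, hgsum, mul_zero, sub_zero]
      have hkcombo : ∑ e ∈ T, k e • e = y := by
        simp only [hk, sub_smul, mul_smul]
        rw [Finset.sum_sub_distrib, hcombo, ← Finset.smul_sum, hgcombo, smul_zero, sub_zero]
      set T₂ := (T.erase i₀).filter (fun z => 0 < k z) with hT₂
      have hT₂sub : T₂ ⊆ T := (Finset.filter_subset _ _).trans (Finset.erase_subset _ _)
      have hxT₂ : x ∈ T₂ :=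
        Finset.mem_filter.mpr ⟨Finset.mem_erase.mpr ⟨Ne.symm hi₀x, hx⟩, hkx⟩
      have hsum_erase : ∑ e ∈ T.erase i₀, k e = 1 := by
        rw [Finset.sum_erase _ hki₀]
        exact hksum
      have hcombo_erase : ∑ e ∈ T.erase i₀, k e • e = y := by
        rw [Finset.sum_erase _ (by rw [hki₀, zero_smul])]
        exact hkcombo
      have hsum₂ : ∑ e ∈ T₂, k e = 1 := by
        rw [hT₂, Finset.sum_filter_of_ne]
        · exact hsum_erase
        · intro e he hne
          exact (hknn e (Finset.mem_of_mem_erase he)).lt_of_ne (Ne.symm hne)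
      have hcombo₂ : ∑ e ∈ T₂, k e • e = y := by
        rw [hT₂, Finset.sum_filter_of_ne]
        · exact hcombo_erase
        · intro e he hne
          have hke : k e ≠ 0 := fun h0 => hne (by rw [h0, zero_smul])
          exact (hknn e (Finset.mem_of_mem_erase he)).lt_of_ne (Ne.symm hke)
      have hpos₂ : ∀ u ∈ T₂, 0 < k u := fun u hu => (Finset.mem_filter.mp hu).2
      have hcard₂ : T₂.card ≤ n := by
        have h1 : T₂.card ≤ (T.erase i₀).card := Finset.card_le_card (Finset.filter_subset _ _)
        have h2 : (T.erase i₀).card < T.card := Finset.card_erase_lt_of_mem hi₀T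
        omega
      obtain ⟨S, w', hST₂, hxS, hSai, hw'pos, hw'sum, hw'combo⟩ :=
        ih T₂ x y k hcard₂ hxT₂ hpos₂ hsum₂ hcombo₂
      exact ⟨S, w', hST₂.trans hT₂sub, hxS, hSai, hw'pos, hw'sum, hw'combo⟩

/-- A positive convex combination of an affinely independent finite set lies in the
intrinsic interior of its convex hull. -/
lemma mem_intrinsicInterior_of_pos {E : Type*} [NormedAddCommGroup E] [NormedSpace ℝ E]
    (S : Finset E) (hS : AffineIndependent ℝ (fun p : {z // z ∈ S} => (p : E)))
    (w : E → ℝ) (hpos : ∀ u ∈ S, 0 < w u) (hsum : ∑ u ∈ S, w u = 1) {y : E}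
    (hy : ∑ u ∈ S, w u • u = y) :
    y ∈ intrinsicInterior ℝ (convexHull ℝ (S : Set E)) := by
  classical
  have hne : S.Nonempty := by
    rcases S.eq_empty_or_nonempty with h | h
    · subst h; simp at hsum
    · exact h
  obtain ⟨p, hp⟩ := hne
  have hpspan : p ∈ affineSpan ℝ (S : Set E) := subset_affineSpan ℝ _ (Finset.mem_coe.mpr hp)
  set W := (affineSpan ℝ (S : Set E)).direction with hW
  have hmem : ∀ z ∈ S, (z : E) - p ∈ W := by
    intro z hz
    simpa [vsub_eq_sub] using
      AffineSubspace.vsub_mem_direction (subset_affineSpan ℝ _ (Finset.mem_coe.mpr hz)) hpspan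
  set g : {z // z ∈ S} → W := fun z => ⟨(z : E) - p, hmem z z.2⟩ with hgdef
  set φ : W →ᵃⁱ[ℝ] E :=
    (AffineIsometryEquiv.constVAdd ℝ E p).toAffineIsometry.comp W.subtypeₗᵢ.toAffineIsometry
    with hφdef
  have hφ : ∀ u : W, φ u = p + (u : E) := fun u => rfl
  have hφg : ∀ z : {z // z ∈ S}, φ (g z) = (z : E) := by
    intro z
    rw [hφ, hgdef]
    simp
  have hφinj : Function.Injective φ := φ.injective
  have hφrange : φ '' Set.range g = (S : Set E) := by
    rw [← Set.range_comp]
    have : (⇑φ ∘ g) = fun z : {z // z ∈ S} => (z : E) := funext hφg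
    rw [this, Subtype.range_coe_subtype]
    rfl
  have hgind : AffineIndependent ℝ g := by
    apply AffineIndependent.of_comp φ.toAffineMap
    have : (⇑φ.toAffineMap ∘ g) = fun z : {z // z ∈ S} => (z : E) := funext hφg
    rw [this]
    exact hS
  have hgtot : affineSpan ℝ (Set.range g) = ⊤ := by
    rw [eq_top_iff]
    intro u _
    have h1 : φ u ∈ affineSpan ℝ (S : Set E) := by
      rw [hφ, add_comm]
      exact AffineSubspace.vadd_mem_of_mem_direction u.2 hpspan
    rw [← hφrange, ← AffineIsometry.coe_toAffineMap, ← AffineSubspace.map_span] at h1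
    obtain ⟨u', hu', hu'eq⟩ := AffineSubspace.mem_map.mp h1
    cases hφinj hu'eq
    exact hu'
  set b : AffineBasis {z // z ∈ S} ℝ W := ⟨g, hgind, hgtot⟩ with hbdef
  set w' : {z // z ∈ S} → ℝ := fun z => w z with hw'def
  have hw'sum : ∑ z : {z // z ∈ S}, w' z = 1 := by
    rw [Finset.univ_eq_attach, Finset.sum_attach S (fun z => w z)] at *
    exact hsum
  set y' : W := Finset.univ.affineCombination ℝ g w' with hy'def
  have hcoord : ∀ i, 0 < b.coord i y' := by
    intro i
    have : b.coord i y' = w' i := by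
      rw [hy'def]
      exact AffineBasis.coord_apply_combination_of_mem b (Finset.mem_univ i) hw'sum
    rw [this]
    exact hpos i i.2
  have hy'int : y' ∈ interior (convexHull ℝ (Set.range b)) := by
    rw [b.interior_convexHull]
    exact hcoord
  have hrangeb : Set.range ⇑b = Set.range g := rfl
  have hφy' : φ y' = y := by
    rw [hy'def, ← AffineIsometry.coe_toAffineMap,
      Finset.map_affineCombination _ g w' hw'sum φ.toAffineMap]
    have h2 : (⇑φ.toAffineMap ∘ g) = fun z : {z // z ∈ S} => (z : E) := funext hφg
    rw [h2, ← hy]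
    rw [Finset.univ_eq_attach]
    have h3 := Finset.attach_affineCombination_coe S w
    have h4 : (fun z : {z // z ∈ S} => (z : E)) = ((↑) : S → E) := rfl
    rw [h4, show w' = (w ∘ Subtype.val) from rfl, h3]
    rw [Finset.affineCombination_eq_linear_combination S id w hsum]
    simp
  have himg : convexHull ℝ (S : Set E) = φ '' convexHull ℝ (Set.range ⇑b) := by
    rw [hrangeb, ← hφrange, ← AffineIsometry.coe_toAffineMap, AffineMap.image_convexHull]
  rw [himg, AffineIsometry.image_intrinsicInterior]
  exact ⟨y', interior_subset_intrinsicInterior hy'int, hφy'⟩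

theorem caratheodory_sharpened
    (d : ℕ) (R : Set (EuclideanSpace ℝ (Fin d)))
    (y : EuclideanSpace ℝ (Fin d))
    (hy : y ∈ intrinsicInterior ℝ (convexHull ℝ R))
    (x : EuclideanSpace ℝ (Fin d)) (hx : x ∈ R) :
    ∃ S : Finset (EuclideanSpace ℝ (Fin d)),
      (S : Set (EuclideanSpace ℝ (Fin d))) ⊆ R ∧ x ∈ S ∧ S.card ≤ d + 1 ∧
      AffineIndependent ℝ (fun p : {z // z ∈ S} => (p : EuclideanSpace ℝ (Fin d))) ∧
      y ∈ intrinsicInterior ℝ (convexHull ℝ (S : Set (EuclideanSpace ℝ (Fin d)))) := by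
  classical
  have hxC : x ∈ convexHull ℝ R := subset_convexHull ℝ R hx
  obtain ⟨z, hzC, a, b, ha, hb, hab, hcombo⟩ := exists_beyond hxC hy
  rw [convexHull_eq_union_convexHull_finite_subsets] at hzC
  simp only [Set.mem_iUnion] at hzC
  obtain ⟨T, hTR, hzT⟩ := hzC
  rw [Finset.convexHull_eq] at hzT
  obtain ⟨v, hvnn, hvsum, hvz⟩ := hzT
  rw [Finset.centerMass_eq_of_sum_1 _ _ hvsum] at hvz
  simp only [id] at hvz
  -- combined weights on `insert x T`
  set T' : Finset (EuclideanSpace ℝ (Fin d)) := insert x T with hT'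
  set w0 : EuclideanSpace ℝ (Fin d) → ℝ := fun u => (if u = x then a else 0) + b * (if u ∈ T then v u else 0) with hw0
  have hxT' : x ∈ T' := Finset.mem_insert_self x T
  have hw0sum : ∑ u ∈ T', w0 u = 1 := by
    rw [hw0]
    rw [Finset.sum_add_distrib]
    have h1 : ∑ u ∈ T', (if u = x then a else 0) = a := by
      rw [Finset.sum_ite_eq' T' x (fun _ => a), if_pos hxT']
    have h2 : ∑ u ∈ T', b * (if u ∈ T then v u else 0) = b := by
      rw [← Finset.mul_sum, Finset.sum_ite_mem,
        Finset.inter_eq_right.mpr (Finset.subset_insert x T), hvsum, mul_one]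
    rw [h1, h2, hab]
  have hw0combo : ∑ u ∈ T', w0 u • u = y := by
    have h1 : ∑ u ∈ T', (if u = x then a else 0) • u = a • x := by
      have : ∀ u ∈ T', (if u = x then a else 0) • u = (if u = x then a • x else 0) := by
        intro u _
        by_cases h : u = x <;> simp [h]
      rw [Finset.sum_congr rfl this, Finset.sum_ite_eq' T' x (fun _ => a • x), if_pos hxT']
    have h2 : ∑ u ∈ T', (b * (if u ∈ T then v u else 0)) • u = b • z := by
      have : ∀ u ∈ T', (b * (if u ∈ T then v u else 0)) • u
          = b • (if u ∈ T then v u • u else 0) := by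
        intro u _
        by_cases h : u ∈ T <;> simp [h, mul_smul]
      rw [Finset.sum_congr rfl this, ← Finset.smul_sum, Finset.sum_ite_mem,
        Finset.inter_eq_right.mpr (Finset.subset_insert x T), hvz]
    calc ∑ u ∈ T', w0 u • u
        = ∑ u ∈ T', ((if u = x then a else 0) • u + (b * (if u ∈ T then v u else 0)) • u) := by
          apply Finset.sum_congr rfl; intro u _; rw [hw0]; rw [add_smul]
      _ = a • x + b • z := by rw [Finset.sum_add_distrib, h1, h2]
      _ = y := hcombo
  have hw0nn : ∀ u ∈ T', 0 ≤ w0 u := by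
    intro u _
    rw [hw0]
    have : 0 ≤ (if u ∈ T then v u else 0) := by
      by_cases h : u ∈ T <;> simp [h]
      exact hvnn u h
    positivity
  have hw0x : 0 < w0 x := by
    rw [hw0]
    simp only [if_pos rfl]
    have : 0 ≤ (if x ∈ T then v x else 0) := by
      by_cases h : x ∈ T <;> simp [h]
      exact hvnn x h
    positivity
  set T'' : Finset (EuclideanSpace ℝ (Fin d)) := T'.filter (fun u => 0 < w0 u) with hT''
  have hxT'' : x ∈ T'' := Finset.mem_filter.mpr ⟨hxT', hw0x⟩
  have hsum'' : ∑ u ∈ T'', w0 u = 1 := by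
    rw [hT'', Finset.sum_filter_of_ne]
    · exact hw0sum
    · intro u hu hne
      exact (hw0nn u hu).lt_of_ne (Ne.symm hne)
  have hcombo'' : ∑ u ∈ T'', w0 u • u = y := by
    rw [hT'', Finset.sum_filter_of_ne]
    · exact hw0combo
    · intro u hu hne
      have : w0 u ≠ 0 := fun h0 => hne (by rw [h0, zero_smul])
      exact (hw0nn u hu).lt_of_ne (Ne.symm this)
  have hpos'' : ∀ u ∈ T'', 0 < w0 u := fun u hu => (Finset.mem_filter.mp hu).2
  obtain ⟨S, w', hST'', hxS, hSai, hw'pos, hw'sum, hw'combo⟩ :=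
    anchored_carath T''.card T'' x y w0 le_rfl hxT'' hpos'' hsum'' hcombo''
  have hSR : (S : Set (EuclideanSpace ℝ (Fin d))) ⊆ R := by
    intro u hu
    have huT' : u ∈ T' := (hST''.trans (Finset.filter_subset _ _)) hu
    rcases Finset.mem_insert.mp huT' with h | h
    · rw [h]; exact hx
    · exact hTR h
  have hcard : S.card ≤ d + 1 := by
    have h1 := hSai.card_le_finrank_succ
    rw [Fintype.card_coe] at h1
    have h2 : Module.finrank ℝ (vectorSpan ℝ (Set.range fun p : {z // z ∈ S} => (p : EuclideanSpace ℝ (Fin d))))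
        ≤ Module.finrank ℝ (EuclideanSpace ℝ (Fin d)) := Submodule.finrank_le _
    have h3 : Module.finrank ℝ (EuclideanSpace ℝ (Fin d)) = d := finrank_euclideanSpace_fin
    omega
  exact ⟨S, hSR, hxS, hcard, hSai,
    mem_intrinsicInterior_of_pos S hSai w' hw'pos hw'sum hw'combo⟩
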